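/- (Theorem 1, quadratic case.) Let F : ℝ^n → ℝ^n be quadratic, H a real n×n Hurwitz matrix, and let x, y : ℝ → ℝ^n be differentiable curves satisfying the mutually coupled system x'(t) = F(x(t)) + (H − DF(s(t)))·r(t), y'(t) = F(y(t)) − (H − DF(s(t)))·r(t), where s(t) = (x(t)+y(t))/2 and r(t) = (x(t)−y(t))/2. Then the two systems synchronize for arbitrary initial conditions: ‖x(t) − y(t)‖ → 0 as t → ∞. -/

import Mathlib

open Filter Matrix NormedSpace Polynomial

attribute [local instance] Matrix.linftyOpNormedAddCommGroup Matrix.linftyOpNormedRing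
  Matrix.linftyOpNormedAlgebra

variable {n : ℕ}

noncomputable def applyCLM (v : Fin n → ℂ) :
    Matrix (Fin n) (Fin n) ℂ →L[ℝ] (Fin n → ℂ) :=
  LinearMap.toContinuousLinearMap
    { toFun := fun A => A.mulVec v
      map_add' := fun A B => Matrix.add_mulVec A B v
      map_smul' := fun a A => by
        ext i
        simp [Matrix.mulVec, dotProduct, Finset.smul_sum, mul_assoc] }

@[simp] lemma applyCLM_apply (v : Fin n → ℂ) (A : Matrix (Fin n) (Fin n) ℂ) :
    applyCLM v A = A.mulVec v := rfl

lemma exp_nilpotent_apply (N : Matrix (Fin n) (Fin n) ℂ) (v : Fin n → ℂ) (k : ℕ)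
    (hk : N ^ k *ᵥ v = 0) (t : ℝ) :
    exp (t • N) *ᵥ v =
      ∑ j ∈ Finset.range k, ((t ^ j * ((j.factorial : ℝ))⁻¹) : ℝ) • (N ^ j *ᵥ v) := by
  have h1 : exp (t • N) = ∑' j : ℕ, ((j.factorial : ℝ))⁻¹ • (t • N) ^ j := by
    rw [exp_eq_tsum (𝕂 := ℝ)]
  have h2 : exp (t • N) *ᵥ v = ∑' j : ℕ, ((j.factorial : ℝ))⁻¹ • ((t • N) ^ j *ᵥ v) := by
    rw [← applyCLM_apply, h1, (applyCLM v).map_tsum (expSeries_summable' (𝕂 := ℝ) (t • N))]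
    simp
  rw [h2]
  have h3 : ∀ j : ℕ, ((j.factorial : ℝ))⁻¹ • ((t • N) ^ j *ᵥ v)
      = ((t ^ j * ((j.factorial : ℝ))⁻¹) : ℝ) • (N ^ j *ᵥ v) := by
    intro j
    rw [_root_.smul_pow, Matrix.smul_mulVec, smul_smul, mul_comm]
  simp_rw [h3]
  refine tsum_eq_sum ?_
  intro j hj
  have hjk : k ≤ j := by simpa using hj
  have : N ^ j = N ^ (j - k) * N ^ k := by
    rw [← pow_add]
    congr 1
    omega
  rw [this, ← Matrix.mulVec_mulVec, hk, Matrix.mulVec_zero, smul_zero]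

lemma tendsto_exp_smul_nilpotent_shift (A : Matrix (Fin n) (Fin n) ℂ) (μ : ℂ) (hμ : μ.re < 0)
    (v : Fin n → ℂ) (k : ℕ) (hk : (A - μ • 1) ^ k *ᵥ v = 0) :
    Tendsto (fun t : ℝ => exp (t • A) *ᵥ v) atTop (nhds 0) := by
  set N : Matrix (Fin n) (Fin n) ℂ := A - μ • 1 with hN
  have key : ∀ t : ℝ, exp (t • A) *ᵥ v =
      ∑ j ∈ Finset.range k, Complex.exp (t * μ) •
        ((((t ^ j * ((j.factorial : ℝ))⁻¹) : ℝ)) • (N ^ j *ᵥ v)) := by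
    intro t
    have hA : t • A = t • (μ • (1 : Matrix (Fin n) (Fin n) ℂ)) + t • N := by
      rw [hN]; module
    have hcomm : Commute (t • (μ • (1 : Matrix (Fin n) (Fin n) ℂ))) (t • N) := by
      unfold Commute SemiconjBy
      simp [smul_mul_assoc, mul_smul_comm, smul_comm t μ]
    have hsplit : exp (t • A) = exp (t • (μ • (1 : Matrix (Fin n) (Fin n) ℂ))) *
        exp (t • N) := by
      rw [hA, Matrix.exp_add_of_commute _ _ hcomm]
    have hscalar : exp (t • (μ • (1 : Matrix (Fin n) (Fin n) ℂ)))
        = Complex.exp (t * μ) • (1 : Matrix (Fin n) (Fin n) ℂ) := by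
      have h1 : t • (μ • (1 : Matrix (Fin n) (Fin n) ℂ))
          = algebraMap ℂ (Matrix (Fin n) (Fin n) ℂ) ((t : ℂ) * μ) := by
        rw [Algebra.algebraMap_eq_smul_one, ← smul_smul]
        norm_cast
      rw [h1]
      erw [← map_exp (algebraMap ℂ (Matrix (Fin n) (Fin n) ℂ))
        (continuous_algebraMap ℂ _)]
      rw [Algebra.algebraMap_eq_smul_one]
      congr 1
      rw [Complex.exp_eq_exp_ℂ]
    rw [hsplit, hscalar, smul_mul_assoc, one_mul, Matrix.smul_mulVec,
      exp_nilpotent_apply N v k hk t, Finset.smul_sum]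
  simp_rw [key]
  have hterm : ∀ j ∈ Finset.range k, Tendsto (fun t : ℝ => Complex.exp (t * μ) •
      ((((t ^ j * ((j.factorial : ℝ))⁻¹) : ℝ)) • ((N ^ j *ᵥ v) : Fin n → ℂ)))
      atTop (nhds 0) := by
    intro j _
    have hnorm : ∀ᶠ t : ℝ in atTop,
        ‖Complex.exp (t * μ) • ((((t ^ j * ((j.factorial : ℝ))⁻¹) : ℝ)) • (N ^ j *ᵥ v))‖
          ≤ (((j.factorial : ℝ))⁻¹ * ‖N ^ j *ᵥ v‖) * (t ^ j * Real.exp (-(-μ.re) * t)) := by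
      filter_upwards [eventually_ge_atTop (0 : ℝ)] with t ht
      rw [norm_smul, norm_smul]
      have h1 : ‖Complex.exp (↑t * μ)‖ = Real.exp (t * μ.re) := by
        rw [Complex.norm_exp]
        congr 1
        simp [Complex.mul_re]
      have h2 : ‖(t ^ j * ((j.factorial : ℝ))⁻¹ : ℝ)‖ = t ^ j * ((j.factorial : ℝ))⁻¹ := by
        rw [Real.norm_of_nonneg (by positivity)]
      rw [h1, h2, neg_neg]
      ring_nf
      rfl
    refine squeeze_zero_norm' hnorm ?_
    have : Tendsto (fun t : ℝ => t ^ j * Real.exp (-(-μ.re) * t)) atTop (nhds 0) := by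
      have h := tendsto_rpow_mul_exp_neg_mul_atTop_nhds_zero (j : ℝ) (-μ.re) (by linarith)
      refine h.congr' ?_
      filter_upwards [eventually_gt_atTop (0 : ℝ)] with t ht
      rw [Real.rpow_natCast]
    simpa using this.const_mul (((j.factorial : ℝ))⁻¹ * ‖N ^ j *ᵥ v‖)
  have := tendsto_finset_sum (Finset.range k) hterm
  simpa using this

lemma tendsto_exp_smul_complex (A : Matrix (Fin n) (Fin n) ℂ)
    (hA : ∀ μ : ℂ, (A.charpoly.eval μ = 0) → μ.re < 0) (v : Fin n → ℂ) :
    Tendsto (fun t : ℝ => exp (t • A) *ᵥ v) atTop (nhds 0) := by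
  classical
  set f : Module.End ℂ (Fin n → ℂ) := Matrix.toLinAlgEquiv' A with hf
  -- the set of decaying vectors is a submodule
  set S : Submodule ℂ (Fin n → ℂ) :=
    { carrier := {w | Tendsto (fun t : ℝ => exp (t • A) *ᵥ w) atTop (nhds 0)}
      add_mem' := by
        intro a b ha hb
        have := ha.add hb
        simpa [Matrix.mulVec_add] using this
      zero_mem' := by simp [Matrix.mulVec_zero, tendsto_const_nhds]
      smul_mem' := by
        intro c w hw
        have := hw.const_smul c
        simpa [Matrix.mulVec_smul] using this } with hS
  -- every generalized eigenvector decays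
  have hgen : ∀ μ : ℂ, f.maxGenEigenspace μ ≤ S := by
    intro μ w hw
    rcases (Module.End.mem_maxGenEigenspace f μ w).mp hw with ⟨k, hk⟩
    by_cases hw0 : w = 0
    · subst hw0; exact S.zero_mem
    -- μ is an eigenvalue, so a root of the characteristic polynomial
    have heig : f.HasEigenvalue μ := by
      refine Module.End.hasEigenvalue_of_hasGenEigenvalue (k := k) ?_
      rw [Module.End.HasGenEigenvalue, Module.End.HasUnifEigenvalue]
      refine fun hbot => hw0 ?_
      have hmem : w ∈ (f.genEigenspace μ) k := by
        rw [Module.End.mem_genEigenspace_nat]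
        exact hk
      simpa [hbot] using hmem
    obtain ⟨u, huE, hu0⟩ := heig.exists_hasEigenvector
    have hu : A *ᵥ u = μ • u := by
      have := (Module.End.mem_eigenspace_iff).mp huE
      simpa [hf, Matrix.toLinAlgEquiv'_apply] using this
    have hdet : ((μ • 1 - A : Matrix (Fin n) (Fin n) ℂ)).det = 0 := by
      rw [← Matrix.exists_mulVec_eq_zero_iff]
      refine ⟨u, hu0, ?_⟩
      rw [Matrix.sub_mulVec, Matrix.smul_mulVec, Matrix.one_mulVec, hu, sub_self]
    have hroot : A.charpoly.eval μ = 0 := by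
      have h1 : A.charpoly.eval μ = ((charmatrix A).map (evalRingHom μ)).det := by
        rw [Matrix.charpoly]
        exact RingHom.map_det (evalRingHom μ) A.charmatrix
      have h2 : (charmatrix A).map (evalRingHom μ) = μ • 1 - A := by
        ext i j
        by_cases hij : i = j
        · subst hij
          simp [charmatrix_apply_eq, Matrix.smul_apply, Matrix.one_apply]
        · simp [charmatrix_apply_ne _ _ _ hij, Matrix.smul_apply, Matrix.one_apply, hij]
      rw [h1, h2, hdet]
    have hμ : μ.re < 0 := hA μ hroot
    have hnil : (A - μ • 1) ^ k *ᵥ w = 0 := by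
      have hEq : (f - μ • 1) ^ k = Matrix.toLinAlgEquiv' ((A - μ • 1) ^ k) := by
        rw [map_pow, map_sub, hf]
        congr 1
        rw [_root_.map_smul, _root_.map_one]
      have h2 : Matrix.toLinAlgEquiv' ((A - μ • 1) ^ k) w = (A - μ • 1) ^ k *ᵥ w :=
        Matrix.toLinAlgEquiv'_apply _ _
      rw [← h2, ← hEq]
      exact hk
    exact tendsto_exp_smul_nilpotent_shift A μ hμ w k hnil
  have htop : (⊤ : Submodule ℂ (Fin n → ℂ)) ≤ S := by
    rw [← Module.End.iSup_maxGenEigenspace_eq_top f]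
    exact iSup_le hgen
  exact htop (Submodule.mem_top (x := v))

noncomputable def applyCLMR (v : Fin n → ℝ) :
    Matrix (Fin n) (Fin n) ℝ →L[ℝ] (Fin n → ℝ) :=
  LinearMap.toContinuousLinearMap
    { toFun := fun A => A.mulVec v
      map_add' := fun A B => Matrix.add_mulVec A B v
      map_smul' := fun a A => by
        ext i
        simp [Matrix.mulVec, dotProduct, Finset.smul_sum, mul_assoc, Finset.mul_sum] }

@[simp] lemma applyCLMR_apply (v : Fin n → ℝ) (A : Matrix (Fin n) (Fin n) ℝ) :
    applyCLMR v A = A.mulVec v := rfl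

lemma tendsto_exp_smul_real (H : Matrix (Fin n) (Fin n) ℝ)
    (hH : ∀ z : ℂ, (Polynomial.aeval z) H.charpoly = 0 → z.re < 0) (w : Fin n → ℝ) :
    Tendsto (fun t : ℝ => exp (t • H) *ᵥ w) atTop (nhds 0) := by
  set A : Matrix (Fin n) (Fin n) ℂ := H.map Complex.ofReal with hA
  have hA' : ∀ μ : ℂ, A.charpoly.eval μ = 0 → μ.re < 0 := by
    intro μ hμ
    refine hH μ ?_
    rw [aeval_def, ← Polynomial.eval_map]
    rwa [hA, show (Complex.ofReal : ℝ → ℂ) = ⇑Complex.ofRealHom from rfl,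
      Matrix.charpoly_map] at hμ
  have hFcont : Continuous (fun M : Matrix (Fin n) (Fin n) ℝ =>
      (Complex.ofRealHom.mapMatrix M : Matrix (Fin n) (Fin n) ℂ)) := by
    refine continuous_pi fun i => continuous_pi fun j => ?_
    exact Complex.continuous_ofReal.comp ((continuous_apply j).comp (continuous_apply i))
  have key : ∀ t : ℝ, (fun i => ((exp (t • H) *ᵥ w) i : ℂ))
      = exp (t • A) *ᵥ (fun i => (w i : ℂ)) := by
    intro t
    have h1 : Complex.ofRealHom.mapMatrix (exp (t • H)) = exp (t • A) := by
      erw [map_exp (Complex.ofRealHom.mapMatrix) hFcont]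
      congr 1
      ext i j
      simp only [RingHom.mapMatrix_apply, Matrix.map_apply, Matrix.smul_apply, smul_eq_mul,
        Complex.ofRealHom_eq_coe, Complex.ofReal_mul, hA, Complex.real_smul]
    rw [← h1]
    ext i
    simp [Matrix.mulVec, dotProduct, Matrix.map_apply, RingHom.mapMatrix_apply]
  have hc := tendsto_exp_smul_complex A hA' (fun i => (w i : ℂ))
  rw [tendsto_pi_nhds] at hc ⊢
  intro i
  have hci := hc i
  have : Tendsto (fun t : ℝ => ((exp (t • H) *ᵥ w) i : ℂ)) atTop (nhds 0) := by
    exact hci.congr fun t => (congrFun (key t) i).symm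
  have := (Complex.continuous_re.tendsto 0).comp this
  simpa [Function.comp_def] using this

lemma solution_eq_exp (H : Matrix (Fin n) (Fin n) ℝ) (d : ℝ → (Fin n → ℝ))
    (hd : ∀ t, HasDerivAt d (H *ᵥ d t) t) (t : ℝ) (ht : 0 ≤ t) :
    d t = exp (t • H) *ᵥ d 0 := by
  set g : ℝ → (Fin n → ℝ) := fun u => exp (u • H) *ᵥ d 0 with hg
  have hgderiv : ∀ u : ℝ, HasDerivAt g (H *ᵥ g u) u := by
    intro u
    have h1 : HasDerivAt (fun s : ℝ => exp (s • H)) (H * exp (u • H)) u :=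
      hasDerivAt_exp_smul_const' H u
    have h2 := ((applyCLMR (d 0)).hasFDerivAt.comp_hasDerivAt u h1)
    erw [applyCLMR_apply] at h2
    simpa [hg, Matrix.mulVec_mulVec, Function.comp_def] using h2
  set Φ : (Fin n → ℝ) →L[ℝ] (Fin n → ℝ) := LinearMap.toContinuousLinearMap H.mulVecLin with hΦ
  have hlip : LipschitzWith ‖Φ‖₊ (fun z : Fin n → ℝ => H *ᵥ z) := by
    have := Φ.lipschitz
    simpa [hΦ, Matrix.coe_mulVecLin] using this
  have hinit : d 0 = g 0 := by
    simp [hg, Matrix.one_mulVec]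
  have huniq := ODE_solution_unique (v := fun _ z => H *ᵥ z) (K := ‖Φ‖₊) (a := 0) (b := t)
    (fun _ => hlip)
    (fun u _ => (hd u).continuousAt.continuousWithinAt)
    (fun u _ => (hd u).hasDerivWithinAt)
    (fun u _ => (hgderiv u).continuousAt.continuousWithinAt)
    (fun u _ => (hgderiv u).hasDerivWithinAt)
    hinit
  exact huniq ⟨ht, le_refl t⟩

/-- Theorem 1, quadratic case: For quadratic `F` and Hurwitz `H`,
the mutually coupled systems synchronize for arbitrary initial conditions:
`‖x(t) - y(t)‖ → 0` as `t → ∞`. -/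
theorem quadratic_mutual_synchronization {n : ℕ} (F : (Fin n → ℝ) → (Fin n → ℝ))
    (c : Fin n → ℝ) (L : (Fin n → ℝ) →ₗ[ℝ] (Fin n → ℝ))
    (Q : (Fin n → ℝ) →ₗ[ℝ] (Fin n → ℝ) →ₗ[ℝ] (Fin n → ℝ))
    (hQ : ∀ u v, Q u v = Q v u)
    (hF : ∀ v, F v = c + L v + Q v v)
    (H : Matrix (Fin n) (Fin n) ℝ)
    (hH : ∀ z : ℂ, (Polynomial.aeval z) H.charpoly = 0 → z.re < 0)
    (x y s r : ℝ → (Fin n → ℝ))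
    (hs : ∀ t, s t = (1 / 2 : ℝ) • (x t + y t))
    (hr : ∀ t, r t = (1 / 2 : ℝ) • (x t - y t))
    (hx : ∀ t, HasDerivAt x (F (x t) + (H.mulVec (r t) - fderiv ℝ F (s t) (r t))) t)
    (hy : ∀ t, HasDerivAt y (F (y t) - (H.mulVec (r t) - fderiv ℝ F (s t) (r t))) t) :
    Filter.Tendsto (fun t => ‖x t - y t‖) Filter.atTop (nhds 0) := by
  classical
  set Lc : (Fin n → ℝ) →L[ℝ] (Fin n → ℝ) := LinearMap.toContinuousLinearMap L with hLc
  set Qlin : (Fin n → ℝ) →ₗ[ℝ] ((Fin n → ℝ) →L[ℝ] (Fin n → ℝ)) :=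
    { toFun := fun u => LinearMap.toContinuousLinearMap (Q u)
      map_add' := fun u v => by ext w; simp
      map_smul' := fun a u => by ext w; simp } with hQlin
  set Qc : (Fin n → ℝ) →L[ℝ] ((Fin n → ℝ) →L[ℝ] (Fin n → ℝ)) :=
    LinearMap.toContinuousLinearMap Qlin with hQc
  have hQc_apply : ∀ u w : Fin n → ℝ, Qc u w = Q u w := fun u w => rfl
  have hbb : IsBoundedBilinearMap ℝ (fun p : (Fin n → ℝ) × (Fin n → ℝ) => Qc p.1 p.2) :=
    Qc.isBoundedBilinearMap
  have hFderiv : ∀ v : Fin n → ℝ, HasFDerivAt F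
      (Lc + ((hbb.deriv (v, v)).comp ((ContinuousLinearMap.id ℝ (Fin n → ℝ)).prod
        (ContinuousLinearMap.id ℝ (Fin n → ℝ))))) v := by
    intro v
    have hid : HasFDerivAt (fun u : Fin n → ℝ => (u, u))
        ((ContinuousLinearMap.id ℝ (Fin n → ℝ)).prod (ContinuousLinearMap.id ℝ (Fin n → ℝ))) v :=
      (hasFDerivAt_id v).prodMk (hasFDerivAt_id v)
    have hq : HasFDerivAt (fun u : Fin n → ℝ => Qc u u)
        ((hbb.deriv (v, v)).comp ((ContinuousLinearMap.id ℝ (Fin n → ℝ)).prod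
          (ContinuousLinearMap.id ℝ (Fin n → ℝ)))) v :=
      by 
        have hq0 := HasFDerivAt.comp (f := fun u : Fin n → ℝ => (u, u)) (x := v) (hbb.hasFDerivAt (v, v)) hid
        exact hq0
    have htot := ((hasFDerivAt_const c v).add Lc.hasFDerivAt).add hq
    have hFun : F = fun u : Fin n → ℝ => (c + Lc u) + Qc u u := by
      funext u
      rw [hF u, hQc_apply]
      simp [hLc]
    rw [hFun]
    simpa [add_assoc] using htot
  have hDF : ∀ t : ℝ, fderiv ℝ F (s t) (r t)
      = L (r t) + (Q (s t) (r t) + Q (r t) (s t)) := by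
    intro t
    rw [(hFderiv (s t)).fderiv]
    simp only [ContinuousLinearMap.add_apply, ContinuousLinearMap.coe_comp', Function.comp_apply,
      ContinuousLinearMap.prod_apply, ContinuousLinearMap.coe_id', id_eq,
      hbb.deriv_apply]
    rw [hQc_apply, hQc_apply]
    rfl
  -- the difference satisfies the linear ODE
  have hd : ∀ t, HasDerivAt (fun u => x u - y u) (H *ᵥ (x t - y t)) t := by
    intro t
    have h1 := (hx t).sub (hy t)
    have h2 : F (x t) + (H.mulVec (r t) - fderiv ℝ F (s t) (r t))
        - (F (y t) - (H.mulVec (r t) - fderiv ℝ F (s t) (r t))) = H *ᵥ (x t - y t) := by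
      rw [hDF t, hF (x t), hF (y t), hs t, hr t]
      have hm : H *ᵥ ((1 / 2 : ℝ) • (x t - y t)) = (1 / 2 : ℝ) • (H *ᵥ (x t - y t)) :=
        Matrix.mulVec_smul _ _ _
      rw [hm]
      simp only [map_add, map_sub, _root_.map_smul, LinearMap.add_apply, LinearMap.sub_apply,
        LinearMap.smul_apply]
      module
    rw [← h2]
    exact h1
  have h0 := tendsto_exp_smul_real H hH (x 0 - y 0)
  have hdt : Tendsto (fun u => x u - y u) atTop (nhds 0) := by
    refine h0.congr' ?_
    filter_upwards [eventually_ge_atTop (0 : ℝ)] with t ht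
    exact (solution_eq_exp H (fun u => x u - y u) hd t ht).symm
  have := (continuous_norm.tendsto (0 : Fin n → ℝ)).comp hdt
  simpa [Function.comp_def] using this
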